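/- For α > 4, the value Λ₁ = Λ₂ = √(Λ*(α/2)) satisfies α/(2(1 + Λ₁^{α/2})·log(1 + Λ₁^{−α/2})) − 1 = 1, where Λ*(·) is defined by α'/2 = (1 + Λ*(α')^{α'/2})·log(1 + Λ*(α')^{−α'/2}). Moreover this Λ₁ is the unique positive solution of α/(2(1 + x^{α/2})·log(1 + x^{−α/2})) = 2. -/

import Mathlib

open Real

lemma aux_log_lt_inv (t : ℝ) (ht : 0 < t) : Real.log (1 + t⁻¹) < t⁻¹ := by
  have hti : 0 < t⁻¹ := by positivity
  have h := Real.log_lt_sub_one_of_pos (x := 1 + t⁻¹) (by linarith) (by linarith)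
  linarith

lemma aux_g_hasDeriv (t : ℝ) (ht : 0 < t) :
    HasDerivAt (fun t : ℝ => (1 + t) * Real.log (1 + t⁻¹))
      (Real.log (1 + t⁻¹) + (1 + t) * (-(t ^ 2)⁻¹ / (1 + t⁻¹))) t := by
  have hti : 0 < t⁻¹ := by positivity
  have h1 : HasDerivAt (fun t : ℝ => 1 + t) 1 t := (hasDerivAt_id t).const_add 1
  have h2 : HasDerivAt (fun t : ℝ => 1 + t⁻¹) (-(t ^ 2)⁻¹) t :=
    (hasDerivAt_inv ht.ne').const_add 1
  have h3 : HasDerivAt (fun t : ℝ => Real.log (1 + t⁻¹)) (-(t ^ 2)⁻¹ / (1 + t⁻¹)) t :=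
    h2.log (by positivity)
  have h : HasDerivAt (fun t : ℝ => (1 + t) * Real.log (1 + t⁻¹))
      (1 * Real.log (1 + t⁻¹) + (1 + t) * (-(t ^ 2)⁻¹ / (1 + t⁻¹))) t := h1.mul h3
  convert h using 1
  ring

lemma aux_g_strictAnti :
    StrictAntiOn (fun t : ℝ => (1 + t) * Real.log (1 + t⁻¹)) (Set.Ioi 0) := by
  apply strictAntiOn_of_deriv_neg (convex_Ioi 0)
  · intro t ht
    exact (aux_g_hasDeriv t ht).continuousAt.continuousWithinAt
  · intro t ht
    rw [interior_Ioi] at ht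
    have ht : (0:ℝ) < t := ht
    rw [(aux_g_hasDeriv t ht).deriv]
    have hti : 0 < t⁻¹ := by positivity
    have hlog := aux_log_lt_inv t ht
    have key : (1 + t) * (-(t ^ 2)⁻¹ / (1 + t⁻¹)) = -t⁻¹ := by
      field_simp
      ring
    rw [key]
    linarith

theorem symmetric_NE_point (α y : ℝ) (hα : 4 < α) (hy : 0 < y)
    (hLstar : (α / 2) / 2 = (1 + y ^ ((α / 2) / 2)) * Real.log (1 + y ^ (-((α / 2) / 2)))) :
    (α / (2 * (1 + (Real.sqrt y) ^ (α / 2)) * Real.log (1 + (Real.sqrt y) ^ (-(α / 2)))) - 1 = 1) ∧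
    ∀ x : ℝ, 0 < x →
      α / (2 * (1 + x ^ (α / 2)) * Real.log (1 + x ^ (-(α / 2)))) = 2 → x = Real.sqrt y := by
  set s := Real.sqrt y with hsdef
  have hs : 0 < s := Real.sqrt_pos.mpr hy
  have hspow : s ^ (α / 2) = y ^ (α / 2 / 2) := by
    rw [hsdef, Real.sqrt_eq_rpow, ← Real.rpow_mul hy.le]
    ring_nf
  have hspow' : s ^ (-(α / 2)) = y ^ (-(α / 2 / 2)) := by
    rw [hsdef, Real.sqrt_eq_rpow, ← Real.rpow_mul hy.le]
    ring_nf
  -- main denominator value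
  have hden : (1 + s ^ (α / 2)) * Real.log (1 + s ^ (-(α / 2))) = α / 4 := by
    rw [hspow, hspow', ← hLstar]
    ring
  have hα0 : α ≠ 0 := by linarith
  constructor
  · rw [mul_assoc, hden]
    field_simp
    ring
  · intro x hx hxeq
    have hxpow : x ^ (-(α / 2)) = (x ^ (α / 2))⁻¹ := Real.rpow_neg hx.le _
    have hspowneg : s ^ (-(α / 2)) = (s ^ (α / 2))⁻¹ := Real.rpow_neg hs.le _
    have hDne : (1 + x ^ (α / 2)) * Real.log (1 + x ^ (-(α / 2))) ≠ 0 := by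
      intro h
      rw [mul_assoc, h, mul_zero, div_zero] at hxeq
      norm_num at hxeq
    have hDval : (1 + x ^ (α / 2)) * Real.log (1 + x ^ (-(α / 2))) = α / 4 := by
      have h2D : (2:ℝ) * ((1 + x ^ (α / 2)) * Real.log (1 + x ^ (-(α / 2)))) ≠ 0 :=
        mul_ne_zero two_ne_zero hDne
      rw [mul_assoc, div_eq_iff h2D] at hxeq
      linarith
    have hgx : (fun t : ℝ => (1 + t) * Real.log (1 + t⁻¹)) (x ^ (α / 2)) =
        (fun t : ℝ => (1 + t) * Real.log (1 + t⁻¹)) (s ^ (α / 2)) := by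
      simp only
      rw [← hxpow, ← hspowneg, hDval, hden]
    have hxmem : x ^ (α / 2) ∈ Set.Ioi (0:ℝ) := Real.rpow_pos_of_pos hx _
    have hsmem : s ^ (α / 2) ∈ Set.Ioi (0:ℝ) := Real.rpow_pos_of_pos hs _
    have heq : x ^ (α / 2) = s ^ (α / 2) := aux_g_strictAnti.injOn hxmem hsmem hgx
    have hc : (α / 2) ≠ 0 := by positivity
    have h1 : x ^ ((α / 2) * (α / 2)⁻¹) = s ^ ((α / 2) * (α / 2)⁻¹) := by
      rw [Real.rpow_mul hx.le, Real.rpow_mul hs.le, heq]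
    rwa [mul_inv_cancel₀ hc, Real.rpow_one, Real.rpow_one] at h1
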